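/- (Energy identity for the time-fractional modified KdV–Burgers equation.) Let 0 < α < 1, a,b ∈ ℝ, L > 0, and let u ∈ C^{1,3}_{t,x}([0,T]×[0,L]) solve ∂^α_{+0,t}u + u²u_x + a u_{xxx} − b u_{xx} = 0 on (0,L)×(0,T]. Then for every φ ∈ C³([0,L]) and every t ∈ (0,T], ∫₀^L (∂^α_{+0,t}u(x,t)) u(x,t)φ(x) dx = (1/4)∫₀^L u⁴(x,t)φ′(x) dx + (1/2)∫₀^L u²(x,t)(aφ‴(x) + bφ″(x)) dx − ∫₀^L u_x²(x,t)((3a/2)φ′(x) + bφ(x)) dx + 𝓑(L,t) − 𝓑(0,t). -/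

import Mathlib

open Set MeasureTheory Filter

/-- Caputo fractional derivative of order α at base point 0 (in one real variable). -/
noncomputable def caputo (α : ℝ) (f : ℝ → ℝ) (t : ℝ) : ℝ :=
  (1 / Real.Gamma (1 - α)) * ∫ s in (0:ℝ)..t, (t - s) ^ (-α) * deriv f s

/-- Partial derivative in the first (spatial) variable. -/
noncomputable def pdX (u : ℝ → ℝ → ℝ) : ℝ → ℝ → ℝ := fun x t => deriv (fun y => u y t) x

/-- Partial derivative in the second (time) variable. -/
noncomputable def pdT (u : ℝ → ℝ → ℝ) : ℝ → ℝ → ℝ := fun x t => deriv (fun s => u x s) t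

/-- Caputo fractional derivative in the time variable (x fixed). -/
noncomputable def capT (α : ℝ) (u : ℝ → ℝ → ℝ) (x t : ℝ) : ℝ := caputo α (fun s => u x s) t

/-- u belongs to C^{1,n}_{t,x}([0,T] x [0,L]): the spatial derivatives up to order n and
their first time derivatives exist and are continuous on the closed rectangle. -/
def CReg (n : ℕ) (u : ℝ → ℝ → ℝ) (L T : ℝ) : Prop :=
  (∀ k ≤ n, ContinuousOn (fun p : ℝ × ℝ => (pdX^[k] u) p.1 p.2) (Icc 0 L ×ˢ Icc 0 T)) ∧
  (∀ k ≤ n, ContinuousOn (fun p : ℝ × ℝ => pdT (pdX^[k] u) p.1 p.2) (Icc 0 L ×ˢ Icc 0 T)) ∧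
  (∀ k < n, ∀ x ∈ Icc (0:ℝ) L, ∀ t ∈ Icc (0:ℝ) T, DifferentiableAt ℝ (fun y => (pdX^[k] u) y t) x) ∧
  (∀ k ≤ n, ∀ x ∈ Icc (0:ℝ) L, ∀ t ∈ Icc (0:ℝ) T, DifferentiableAt ℝ (fun s => (pdX^[k] u) x s) t)

/-- φ belongs to C^n([0,L]). -/
def Csp (n : ℕ) (φ : ℝ → ℝ) (L : ℝ) : Prop :=
  (∀ k < n, ∀ x ∈ Icc (0:ℝ) L, DifferentiableAt ℝ (deriv^[k] φ) x) ∧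
  ContinuousOn (deriv^[n] φ) (Icc 0 L)


/-- Boundary expression for the modified KdV-Burgers equation. -/
noncomputable def B12 (a b : ℝ) (u : ℝ → ℝ → ℝ) (φ : ℝ → ℝ) (x t : ℝ) : ℝ :=
  -(1/4) * (u x t) ^ 4 * φ x + u x t * pdX u x t * (a * deriv φ x + b * φ x)
    - (1/2) * (u x t) ^ 2 * (a * deriv (deriv φ) x + b * deriv φ x)
    + (a/2) * (pdX u x t) ^ 2 * φ x - a * u x t * pdX (pdX u) x t * φ x


lemma aux_identity (a b L : ℝ) (hL : (0:ℝ) ≤ L)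
    (v w z q f p1 p2 p3 c : ℝ → ℝ)
    (hv : ∀ x ∈ Icc (0:ℝ) L, HasDerivAt v (w x) x)
    (hw : ∀ x ∈ Icc (0:ℝ) L, HasDerivAt w (z x) x)
    (hz : ∀ x ∈ Icc (0:ℝ) L, HasDerivAt z (q x) x)
    (hf : ∀ x ∈ Icc (0:ℝ) L, HasDerivAt f (p1 x) x)
    (hf1 : ∀ x ∈ Icc (0:ℝ) L, HasDerivAt p1 (p2 x) x)
    (hf2 : ∀ x ∈ Icc (0:ℝ) L, HasDerivAt p2 (p3 x) x)
    (hcv : ContinuousOn v (Icc 0 L)) (hcw : ContinuousOn w (Icc 0 L))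
    (hcz : ContinuousOn z (Icc 0 L)) (hcq : ContinuousOn q (Icc 0 L))
    (hcf : ContinuousOn f (Icc 0 L)) (hcp1 : ContinuousOn p1 (Icc 0 L))
    (hcp2 : ContinuousOn p2 (Icc 0 L)) (hcp3 : ContinuousOn p3 (Icc 0 L))
    (hpde : ∀ x ∈ Ioo (0:ℝ) L, c x + (v x) ^ 2 * w x + a * q x - b * z x = 0) :
    ∫ x in (0:ℝ)..L, c x * v x * f x
      = (1/4) * (∫ x in (0:ℝ)..L, (v x) ^ 4 * p1 x)
        + (1/2) * (∫ x in (0:ℝ)..L, (v x) ^ 2 * (a * p3 x + b * p2 x))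
        - (∫ x in (0:ℝ)..L, (w x) ^ 2 * ((3 * a / 2) * p1 x + b * f x))
        + (-(1/4) * (v L) ^ 4 * f L + v L * w L * (a * p1 L + b * f L)
            - (1/2) * (v L) ^ 2 * (a * p2 L + b * p1 L)
            + (a/2) * (w L) ^ 2 * f L - a * v L * z L * f L)
        - (-(1/4) * (v 0) ^ 4 * f 0 + v 0 * w 0 * (a * p1 0 + b * f 0)
            - (1/2) * (v 0) ^ 2 * (a * p2 0 + b * p1 0)
            + (a/2) * (w 0) ^ 2 * f 0 - a * v 0 * z 0 * f 0) := by
  set g : ℝ → ℝ := fun x =>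
    -(1/4) * (v x) ^ 4 * f x + v x * w x * (a * p1 x + b * f x)
      - (1/2) * (v x) ^ 2 * (a * p2 x + b * p1 x)
      + (a/2) * (w x) ^ 2 * f x - a * v x * z x * f x with hgdef
  set E : ℝ → ℝ := fun x =>
    -((v x) ^ 3 * w x * f x) - (1/4) * (v x) ^ 4 * p1 x
      + ((w x) ^ 2 + v x * z x) * (a * p1 x + b * f x)
      - (1/2) * (v x) ^ 2 * (a * p3 x + b * p2 x)
      + (a/2) * (w x) ^ 2 * p1 x - a * v x * q x * f x - a * v x * z x * p1 x with hEdef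
  have hg : ∀ x ∈ Icc (0:ℝ) L, HasDerivAt g (E x) x := by
    intro x hx
    have h1 := (((hv x hx).pow 4).const_mul (-(1/4) : ℝ)).mul (hf x hx)
    have h2 := ((hv x hx).mul (hw x hx)).mul
      (((hf1 x hx).const_mul a).add ((hf x hx).const_mul b))
    have h3 := (((hv x hx).pow 2).const_mul ((1:ℝ)/2)).mul
      (((hf2 x hx).const_mul a).add ((hf1 x hx).const_mul b))
    have h4 := (((hw x hx).pow 2).const_mul (a/2)).mul (hf x hx)
    have h5 := ((((hv x hx).const_mul a).mul (hz x hx))).mul (hf x hx)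
    have H := (((h1.add h2).sub h3).add h4).sub h5
    have : E x = -(1 / 4) * (4 * v x ^ (4-1) * w x) * f x + -(1 / 4) * v x ^ 4 * p1 x +
        (w x * w x + v x * z x) * (a * p1 x + b * f x) +
          v x * w x * (a * p2 x + b * p1 x) -
        (1 / 2 * (2 * v x ^ (2-1) * w x) * (a * p2 x + b * p1 x) +
          1 / 2 * v x ^ 2 * (a * p3 x + b * p2 x)) +
        (a / 2 * (2 * w x ^ (2-1) * z x) * f x + a / 2 * w x ^ 2 * p1 x) -
        ((a * w x * z x + a * v x * q x) * f x + a * v x * z x * p1 x) := by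
      simp only [hEdef]; norm_num; ring
    rw [this]
    refine H.congr_deriv ?_
    simp only [Pi.add_apply, Pi.mul_apply, Pi.pow_apply]; norm_num; ring
  have huIcc : uIcc (0:ℝ) L = Icc 0 L := uIcc_of_le hL
  have hint1 : IntervalIntegrable (fun x => (v x) ^ 4 * p1 x) volume 0 L := by
    apply ContinuousOn.intervalIntegrable; rw [huIcc]; fun_prop
  have hint2 : IntervalIntegrable (fun x => (v x) ^ 2 * (a * p3 x + b * p2 x)) volume 0 L := by
    apply ContinuousOn.intervalIntegrable; rw [huIcc]; fun_prop
  have hint3 : IntervalIntegrable (fun x => (w x) ^ 2 * ((3 * a / 2) * p1 x + b * f x)) volume 0 L := by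
    apply ContinuousOn.intervalIntegrable; rw [huIcc]; fun_prop
  have hintE : IntervalIntegrable E volume 0 L := by
    apply ContinuousOn.intervalIntegrable; rw [huIcc]; simp only [hEdef]; fun_prop
  have hFTC : ∫ x in (0:ℝ)..L, E x = g L - g 0 :=
    intervalIntegral.integral_eq_sub_of_hasDerivAt
      (fun x hx => hg x (huIcc ▸ hx)) hintE
  have hsub : (∫ x in (0:ℝ)..L, c x * v x * f x)
      = ∫ x in (0:ℝ)..L, ((1/4) * ((v x) ^ 4 * p1 x)
          + (1/2) * ((v x) ^ 2 * (a * p3 x + b * p2 x))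
          - (w x) ^ 2 * ((3 * a / 2) * p1 x + b * f x) + E x) := by
    apply intervalIntegral.integral_congr_ae
    have hL0 : (volume : Measure ℝ) {L} = 0 := measure_singleton L
    filter_upwards [compl_mem_ae_iff.mpr hL0] with x hxne hxmem
    rw [Set.uIoc_of_le hL] at hxmem
    have hxo : x ∈ Ioo (0:ℝ) L := ⟨hxmem.1, lt_of_le_of_ne hxmem.2 hxne⟩
    have hc : c x = b * z x - (v x) ^ 2 * w x - a * q x := by
      have := hpde x hxo; linarith
    rw [hc]; simp only [hEdef]; ring
  rw [hsub,
    intervalIntegral.integral_add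
      (((hint1.const_mul (1/4)).add (hint2.const_mul (1/2))).sub hint3) hintE,
    intervalIntegral.integral_sub ((hint1.const_mul (1/4)).add (hint2.const_mul (1/2))) hint3,
    intervalIntegral.integral_add (hint1.const_mul (1/4)) (hint2.const_mul (1/2)),
    intervalIntegral.integral_const_mul, intervalIntegral.integral_const_mul, hFTC]
  simp only [hgdef]
  ring

/-- Energy identity for the time-fractional modified KdV-Burgers equation. -/
theorem mkdv_burgers_energy_identity
    (α a b L T : ℝ) (hα : 0 < α ∧ α < 1) (hL : 0 < L) (hT : 0 < T)
    (u : ℝ → ℝ → ℝ)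
    (hreg : CReg 3 u L T)
    (hpde : ∀ x ∈ Ioo (0:ℝ) L, ∀ t ∈ Ioc (0:ℝ) T,
      capT α u x t + (u x t) ^ 2 * pdX u x t + a * pdX (pdX (pdX u)) x t
        - b * pdX (pdX u) x t = 0) :
    ∀ φ : ℝ → ℝ, Csp 3 φ L → ∀ t ∈ Ioc (0:ℝ) T,
      (∫ x in (0:ℝ)..L, capT α u x t * u x t * φ x)
        = (1/4) * (∫ x in (0:ℝ)..L, (u x t) ^ 4 * deriv φ x)
          + (1/2) * (∫ x in (0:ℝ)..L, (u x t) ^ 2 * (a * deriv (deriv (deriv φ)) x + b * deriv (deriv φ) x))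
          - (∫ x in (0:ℝ)..L, (pdX u x t) ^ 2 * ((3 * a / 2) * deriv φ x + b * φ x))
          + B12 a b u φ L t - B12 a b u φ 0 t := by
  intro φ hφ t ht
  have htT : t ∈ Icc (0:ℝ) T := ⟨ht.1.le, ht.2⟩
  obtain ⟨hC, _, hd, _⟩ := hreg
  have hv : ∀ x ∈ Icc (0:ℝ) L, HasDerivAt (fun y => u y t) (pdX u x t) x :=
    fun x hx => (hd 0 (by norm_num) x hx t htT).hasDerivAt
  have hw : ∀ x ∈ Icc (0:ℝ) L, HasDerivAt (fun y => pdX u y t) (pdX (pdX u) x t) x :=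
    fun x hx => (hd 1 (by norm_num) x hx t htT).hasDerivAt
  have hz : ∀ x ∈ Icc (0:ℝ) L, HasDerivAt (fun y => pdX (pdX u) y t) (pdX (pdX (pdX u)) x t) x :=
    fun x hx => (hd 2 (by norm_num) x hx t htT).hasDerivAt
  have hcont : ∀ k ≤ 3, ContinuousOn (fun x => pdX^[k] u x t) (Icc 0 L) := by
    intro k hk
    exact (hC k hk).comp (by fun_prop) (fun x hx => Set.mk_mem_prod hx htT)
  have hp : ∀ x ∈ Icc (0:ℝ) L, HasDerivAt φ (deriv φ x) x :=
    fun x hx => (hφ.1 0 (by norm_num) x hx).hasDerivAt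
  have hp1 : ∀ x ∈ Icc (0:ℝ) L, HasDerivAt (deriv φ) (deriv (deriv φ) x) x :=
    fun x hx => (hφ.1 1 (by norm_num) x hx).hasDerivAt
  have hp2 : ∀ x ∈ Icc (0:ℝ) L, HasDerivAt (deriv (deriv φ)) (deriv (deriv (deriv φ)) x) x :=
    fun x hx => (hφ.1 2 (by norm_num) x hx).hasDerivAt
  have hcφ : ContinuousOn φ (Icc 0 L) :=
    fun x hx => ((hφ.1 0 (by norm_num) x hx).continuousAt).continuousWithinAt
  have hcp1 : ContinuousOn (deriv φ) (Icc 0 L) :=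
    fun x hx => ((hφ.1 1 (by norm_num) x hx).continuousAt).continuousWithinAt
  have hcp2 : ContinuousOn (deriv (deriv φ)) (Icc 0 L) :=
    fun x hx => ((hφ.1 2 (by norm_num) x hx).continuousAt).continuousWithinAt
  have hcp3 : ContinuousOn (deriv (deriv (deriv φ))) (Icc 0 L) := hφ.2
  have hpde' : ∀ x ∈ Ioo (0:ℝ) L,
      capT α u x t + (u x t) ^ 2 * pdX u x t + a * pdX (pdX (pdX u)) x t
        - b * pdX (pdX u) x t = 0 := fun x hx => hpde x hx t ht
  have key := aux_identity a b L hL.le (fun x => u x t) (fun x => pdX u x t)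
    (fun x => pdX (pdX u) x t) (fun x => pdX (pdX (pdX u)) x t)
    φ (deriv φ) (deriv (deriv φ)) (deriv (deriv (deriv φ)))
    (fun x => capT α u x t) hv hw hz hp hp1 hp2
    (hcont 0 (by norm_num)) (hcont 1 (by norm_num)) (hcont 2 (by norm_num))
    (hcont 3 (by norm_num)) hcφ hcp1 hcp2 hcp3 hpde'
  simpa [B12] using key
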